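/- Let φ(r) = 1 + 2e^{2r} + e^{4r} − (−1 + e^{2r} + 2e^{4r})·r, and let r* ∈ (0,1) be such that φ(r*) = 0 while φ(r) > 0 for all r ∈ [0, r*) (numerically r* ≈ 0.7074, the smallest positive root of φ). Then for every complex number z with |z| < r*, one has Re( 1 + z·𝔅''(z)/𝔅'(z) ) > 0; that is, 𝔅 is convex on the disk |z| < r*. -/

import Mathlib

open Complex Metric

/-- The bean function 𝔅(z) = (1 + tanh z)^(1/2), principal branch of the complex power. -/
noncomputable def Bean (z : ℂ) : ℂ := (1 + Complex.tanh z) ^ ((1:ℂ)/2)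

/-- The open unit disk in ℂ. -/
def unitDisk : Set ℂ := Metric.ball (0:ℂ) 1

/-- `Subord p g` : p is subordinate to g on the unit disk. -/
def Subord (p g : ℂ → ℂ) : Prop :=
  ∃ ω : ℂ → ℂ, AnalyticOnNhd ℂ ω unitDisk ∧ ω 0 = 0 ∧
    (∀ z ∈ unitDisk, ‖ω z‖ < 1) ∧ ∀ z ∈ unitDisk, p z = g (ω z)


/-- φ(r) = 1 + 2e^{2r} + e^{4r} − (−1 + e^{2r} + 2e^{4r})·r. -/
noncomputable def beanPhi (r : ℝ) : ℝ :=
  1 + 2 * Real.exp (2*r) + Real.exp (4*r)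
    - (-1 + Real.exp (2*r) + 2 * Real.exp (4*r)) * r

section Aux

lemma exp_le_taylor {x : ℝ} (h1 : 0 ≤ x) (h2 : x ≤ 1) :
    Real.exp x ≤ 1 + x + x^2/2 + x^3/6 + x^4/24 + x^5/120 + x^6/720 + x^7*8/35280 := by
  have h := Real.exp_bound' h1 h2 (n := 7) (by norm_num)
  simp [Finset.sum_range_succ, Nat.factorial] at h
  nlinarith [h]
lemma taylor_le_exp {x : ℝ} (h1 : 0 ≤ x) :
    1 + x + x^2/2 + x^3/6 + x^4/24 + x^5/120 + x^6/720 ≤ Real.exp x := by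
  have h := Real.sum_le_exp_of_nonneg h1 7
  simp [Finset.sum_range_succ, Nat.factorial] at h
  nlinarith [h]

lemma exp03_lb : (1.3498:ℝ) ≤ Real.exp 0.3 := by nlinarith [taylor_le_exp (by norm_num : (0:ℝ) ≤ 0.3)]
lemma exp03_ub : Real.exp 0.3 ≤ 1.3499 := by nlinarith [exp_le_taylor (by norm_num : (0:ℝ) ≤ 0.3) (by norm_num : (0.3:ℝ) ≤ 1)]
lemma exp06_lb : (1.8221:ℝ) ≤ Real.exp 0.6 := by nlinarith [taylor_le_exp (by norm_num : (0:ℝ) ≤ 0.6)]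
lemma exp06_ub : Real.exp 0.6 ≤ 1.8222 := by nlinarith [exp_le_taylor (by norm_num : (0:ℝ) ≤ 0.6) (by norm_num : (0.6:ℝ) ≤ 1)]
lemma exp09_lb : (2.4594:ℝ) ≤ Real.exp 0.9 := by nlinarith [taylor_le_exp (by norm_num : (0:ℝ) ≤ 0.9)]
lemma exp09_ub : Real.exp 0.9 ≤ 2.4597 := by nlinarith [exp_le_taylor (by norm_num : (0:ℝ) ≤ 0.9) (by norm_num : (0.9:ℝ) ≤ 1)]
lemma exp072_lb : (2.0544:ℝ) ≤ Real.exp 0.72 := by nlinarith [taylor_le_exp (by norm_num : (0:ℝ) ≤ 0.72)]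
lemma exp072_ub : Real.exp 0.72 ≤ 2.0545 := by nlinarith [exp_le_taylor (by norm_num : (0:ℝ) ≤ 0.72) (by norm_num : (0.72:ℝ) ≤ 1)]

lemma exp12_lb : (3.32:ℝ) ≤ Real.exp 1.2 := by
  have h : Real.exp 1.2 = Real.exp 0.6 * Real.exp 0.6 := by
    rw [← Real.exp_add]; norm_num
  rw [h]; nlinarith [exp06_lb, Real.exp_pos 0.6, sq_nonneg (Real.exp 0.6 - 1.8221)]
lemma exp12_ub : Real.exp 1.2 ≤ 3.3205 := by
  have h : Real.exp 1.2 = Real.exp 0.6 * Real.exp 0.6 := by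
    rw [← Real.exp_add]; norm_num
  rw [h]; nlinarith [exp06_ub, Real.exp_pos 0.6, exp06_lb, sq_nonneg (Real.exp 0.6 - 1.8222)]
lemma exp144_lb : (4.2205:ℝ) ≤ Real.exp 1.44 := by
  have h : Real.exp 1.44 = Real.exp 0.72 * Real.exp 0.72 := by
    rw [← Real.exp_add]; norm_num
  rw [h]; nlinarith [exp072_lb, Real.exp_pos 0.72, sq_nonneg (Real.exp 0.72 - 2.0544)]
lemma exp144_ub : Real.exp 1.44 ≤ 4.221 := by
  have h : Real.exp 1.44 = Real.exp 0.72 * Real.exp 0.72 := by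
    rw [← Real.exp_add]; norm_num
  rw [h]; nlinarith [exp072_ub, Real.exp_pos 0.72, exp072_lb, sq_nonneg (Real.exp 0.72 - 2.0545)]

lemma phi072_neg : beanPhi 0.72 < 0 := by
  have h2 : Real.exp (2*(0.72:ℝ)) = Real.exp 1.44 := by norm_num
  have h4 : Real.exp (4*(0.72:ℝ)) = Real.exp 1.44 * Real.exp 1.44 := by
    rw [← Real.exp_add]; norm_num
  unfold beanPhi
  rw [h2, h4]
  nlinarith [exp144_lb, exp144_ub, sq_nonneg (Real.exp 1.44 - 4.2205)]

lemma rstar_lt_072 (rstar : ℝ) (hroot : beanPhi rstar = 0)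
    (hpos : ∀ r : ℝ, 0 ≤ r → r < rstar → 0 < beanPhi r) : rstar < 0.72 := by
  rcases lt_trichotomy rstar 0.72 with h | h | h
  · exact h
  · exfalso; rw [h] at hroot; linarith [phi072_neg]
  · exfalso
    have := hpos 0.72 (by norm_num) h
    linarith [phi072_neg]

lemma hasDerivAt_psiF (R x : ℝ) :
    HasDerivAt (fun t => beanPhi t - 2*(2-t)*(R-t^2)*Real.exp (2*t))
      (Real.exp (2*x)^2*(2-8*x) + Real.exp (2*x)*(3+6*x+2*x^2-4*x^3) + 1
        - 2*Real.exp (2*x)*(3-2*x)*R) x := by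
  have he2 : HasDerivAt (fun t : ℝ => Real.exp (2*t)) (Real.exp (2*x) * 2) x := by
    simpa using (HasDerivAt.exp ((hasDerivAt_id x).const_mul 2))
  have he4 : HasDerivAt (fun t : ℝ => Real.exp (4*t)) (Real.exp (4*x) * 4) x := by
    simpa using (HasDerivAt.exp ((hasDerivAt_id x).const_mul 4))
  have h1 : HasDerivAt (fun t : ℝ => 1 + 2*Real.exp (2*t) + Real.exp (4*t))
      (2*(Real.exp (2*x) * 2) + Real.exp (4*x) * 4) x := by
    exact (((hasDerivAt_const x (1:ℝ)).add (he2.const_mul 2)).add he4).congr_deriv (by ring)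
  have h2 : HasDerivAt (fun t : ℝ => (-1 + Real.exp (2*t) + 2*Real.exp (4*t)) * t)
      ((Real.exp (2*x) * 2 + 2*(Real.exp (4*x) * 4)) * x
        + (-1 + Real.exp (2*x) + 2*Real.exp (4*x)) * 1) x := by
    have := (((hasDerivAt_const x (-1:ℝ)).add he2).add (he4.const_mul 2)).mul (hasDerivAt_id x)
    simp only [id] at this
    exact this.congr_deriv (by simp only [Pi.add_apply]; ring)
  have h3 : HasDerivAt (fun t : ℝ => 2*(2-t)*(R-t^2)*Real.exp (2*t))
      (((2*(0-1))*(R-x^2) + (2*(2-x))*(0 - 2*x))*Real.exp (2*x)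
        + (2*(2-x)*(R-x^2))*(Real.exp (2*x) * 2)) x := by
    have ha : HasDerivAt (fun t : ℝ => 2*(2-t)) (2*(0-1)) x :=
      ((hasDerivAt_const x (2:ℝ)).sub (hasDerivAt_id x)).const_mul 2
    have hb : HasDerivAt (fun t : ℝ => R - t^2) (0 - 2*x) x := by
      exact ((hasDerivAt_const x R).sub (hasDerivAt_pow 2 x)).congr_deriv (by norm_num)
    exact ((ha.mul hb).mul he2)
  have h := (h1.sub h2).sub h3
  have h4x : Real.exp (4*x) = Real.exp (2*x) * Real.exp (2*x) := by
    rw [← Real.exp_add]; ring_nf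
  have hfe : (fun t => beanPhi t - 2*(2-t)*(R-t^2)*Real.exp (2*t))
      = (fun t : ℝ => (1 + 2*Real.exp (2*t) + Real.exp (4*t))
          - (-1 + Real.exp (2*t) + 2*Real.exp (4*t)) * t - 2*(2-t)*(R-t^2)*Real.exp (2*t)) := by
    funext t; simp [beanPhi]
  rw [hfe]
  exact h.congr_deriv (by rw [h4x]; ring)


set_option maxHeartbeats 1000000 in
lemma psi_nonneg_low {R x : ℝ} (hR : R ≤ 0.5184) (hx0 : 0 ≤ x) (hx6 : x ≤ 0.6) :
    0 ≤ beanPhi x - 2*(2-x)*(R-x^2)*Real.exp (2*x) := by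
  set E := Real.exp (2*x) with hE
  have hEpos : 0 < E := Real.exp_pos _
  have hmono : 2*(2-x)*(R-x^2)*E ≤ 2*(2-x)*(0.5184-x^2)*E := by
    have h1 : (0:ℝ) < 2*(2-x) := by linarith
    have := mul_le_mul_of_nonneg_right (mul_le_mul_of_nonneg_left
      (by linarith : R - x^2 ≤ 0.5184 - x^2) h1.le) hEpos.le
    linarith
  have hphi : beanPhi x = 1 + 2*E + E^2 - (-1 + E + 2*E^2)*x := by
    have h4x : Real.exp (4*x) = E^2 := by
      rw [hE, pow_two, ← Real.exp_add]; ring_nf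
    simp [beanPhi, h4x, hE]
  rw [hphi]
  have key : 0 ≤ 1 + 2*E + E^2 - (-1 + E + 2*E^2)*x - 2*(2-x)*(0.5184-x^2)*E := by
    rcases le_or_gt x 0.15 with h | h
    · have hE1 : 1 ≤ E := Real.one_le_exp (by linarith)
      have hE2 : E ≤ 1.3499 := le_trans (Real.exp_le_exp.mpr (by linarith)) exp03_ub
      nlinarith [mul_nonneg (sub_nonneg.2 hx0) (sub_nonneg.2 h),
        mul_nonneg (sub_nonneg.2 hE1) (sub_nonneg.2 hE2),
        mul_nonneg (mul_nonneg (sub_nonneg.2 hE1) (sub_nonneg.2 hE2)) hx0,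
        mul_nonneg (mul_nonneg (sub_nonneg.2 hx0) (sub_nonneg.2 h)) hEpos.le,
        mul_nonneg (sub_nonneg.2 hE2) (pow_nonneg hx0 3),
        mul_nonneg (sub_nonneg.2 hE1) (pow_nonneg hx0 3)]
    · rcases le_or_gt x 0.3 with h2 | h2
      · have hE1 : 1.3498 ≤ E := le_trans exp03_lb (Real.exp_le_exp.mpr (by linarith))
        have hE2 : E ≤ 1.8222 := le_trans (Real.exp_le_exp.mpr (by linarith)) exp06_ub
        nlinarith [mul_nonneg (sub_nonneg.2 h.le) (sub_nonneg.2 h2),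
          mul_nonneg (sub_nonneg.2 hE1) (sub_nonneg.2 hE2),
          mul_nonneg (mul_nonneg (sub_nonneg.2 hE1) (sub_nonneg.2 hE2)) hx0,
          mul_nonneg (mul_nonneg (sub_nonneg.2 h.le) (sub_nonneg.2 h2)) hEpos.le,
          mul_nonneg (sub_nonneg.2 hE2) (pow_nonneg hx0 3),
          mul_nonneg (sub_nonneg.2 hE1) (pow_nonneg hx0 3)]
      · rcases le_or_gt x 0.45 with h3 | h3
        · have hE1 : 1.8221 ≤ E := le_trans exp06_lb (Real.exp_le_exp.mpr (by linarith))
          have hE2 : E ≤ 2.4597 := le_trans (Real.exp_le_exp.mpr (by linarith)) exp09_ub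
          nlinarith [mul_nonneg (sub_nonneg.2 h2.le) (sub_nonneg.2 h3),
            mul_nonneg (sub_nonneg.2 hE1) (sub_nonneg.2 hE2),
            mul_nonneg (mul_nonneg (sub_nonneg.2 hE1) (sub_nonneg.2 hE2)) hx0,
            mul_nonneg (mul_nonneg (sub_nonneg.2 h2.le) (sub_nonneg.2 h3)) hEpos.le,
            mul_nonneg (sub_nonneg.2 hE2) (pow_nonneg hx0 3),
            mul_nonneg (sub_nonneg.2 hE1) (pow_nonneg hx0 3)]
        · have hE1 : 2.4594 ≤ E := le_trans exp09_lb (Real.exp_le_exp.mpr (by linarith))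
          have hE2 : E ≤ 3.3205 := le_trans (Real.exp_le_exp.mpr (by linarith)) exp12_ub
          nlinarith [mul_nonneg (sub_nonneg.2 h3.le) (sub_nonneg.2 hx6),
            mul_nonneg (sub_nonneg.2 hE1) (sub_nonneg.2 hE2),
            mul_nonneg (mul_nonneg (sub_nonneg.2 hE1) (sub_nonneg.2 hE2)) hx0,
            mul_nonneg (mul_nonneg (sub_nonneg.2 h3.le) (sub_nonneg.2 hx6)) hEpos.le,
            mul_nonneg (sub_nonneg.2 hE2) (pow_nonneg hx0 3),
            mul_nonneg (sub_nonneg.2 hE1) (pow_nonneg hx0 3)]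
  linarith

lemma psi_deriv_neg {R x : ℝ} (hR : 0 ≤ R) (hx1 : 0.6 ≤ x) (hx2 : x ≤ 0.72) :
    Real.exp (2*x)^2*(2-8*x) + Real.exp (2*x)*(3+6*x+2*x^2-4*x^3) + 1
      - 2*Real.exp (2*x)*(3-2*x)*R < 0 := by
  set u := Real.exp (2*x) with hu
  have hu1 : 3.32 ≤ u := le_trans exp12_lb (Real.exp_le_exp.mpr (by linarith))
  have hu2 : u ≤ 4.221 := le_trans (Real.exp_le_exp.mpr (by linarith)) exp144_ub
  have hterm : 0 ≤ 2*u*(3-2*x)*R := by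
    apply mul_nonneg; apply mul_nonneg; apply mul_nonneg <;> nlinarith
    · linarith
    · exact hR
  nlinarith [mul_nonneg (sub_nonneg.mpr hu1) (sub_nonneg.mpr hu2),
    mul_nonneg (mul_nonneg (sub_nonneg.mpr hx1) (sub_nonneg.mpr hx2)) (sub_nonneg.mpr hu1),
    mul_nonneg (sub_nonneg.mpr hx1) (sub_nonneg.mpr hx2),
    mul_nonneg (mul_nonneg (sub_nonneg.mpr hx1) (sub_nonneg.mpr hx2)) (sub_nonneg.mpr hu2),
    sq_nonneg (u - 3.32), sq_nonneg (x-0.6), sq_nonneg (x-0.72)]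

lemma psi_symm {R s : ℝ} (hs : 0 ≤ s) (hR : R ≤ 1)
    (h : 0 ≤ beanPhi s - 2*(2-s)*(R-s^2)*Real.exp (2*s)) :
    0 ≤ beanPhi (-s) - 2*(2-(-s))*(R-(-s)^2)*Real.exp (2*(-s)) := by
  set w := Real.exp (2*s) with hw
  have hw0 : 0 < w := Real.exp_pos _
  have e2 : Real.exp (2*(-s)) = w⁻¹ := by
    rw [show 2*(-s) = -(2*s) by ring, Real.exp_neg]
  have e4 : Real.exp (4*(-s)) = w⁻¹ * w⁻¹ := by
    rw [show (4:ℝ)*(-s) = -(2*s) + -(2*s) by ring, Real.exp_add, Real.exp_neg]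
  have e4' : Real.exp (4*s) = w * w := by
    rw [show (4:ℝ)*s = 2*s + 2*s by ring, Real.exp_add]
  have hexp : beanPhi s - 2*(2-s)*(R-s^2)*w
      = 1 + 2*w + w*w - (-1 + w + 2*(w*w))*s - 2*(2-s)*(R-s^2)*w := by
    simp [beanPhi, e4', hw]
  have key : w^2 * (beanPhi (-s) - 2*(2-(-s))*(R-(-s)^2)*Real.exp (2*(-s)))
      = (beanPhi s - 2*(2-s)*(R-s^2)*w)
        + s*(w^2 + 1 + 2*w - 4*R*w + 4*s^2*w) := by
    simp only [beanPhi, e2, e4, e4', hexp]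
    field_simp
    ring
  have hpos2 : 0 ≤ s*(w^2 + 1 + 2*w - 4*R*w + 4*s^2*w) := by
    apply mul_nonneg hs
    nlinarith [sq_nonneg (w-1), mul_nonneg (mul_nonneg hs hs) hw0.le]
  nlinarith [key, sq_nonneg w, mul_pos hw0 hw0]

lemma psi_nonneg_pos (rstar : ℝ) (h0 : 0 < rstar) (hroot : beanPhi rstar = 0)
    (hpos : ∀ r : ℝ, 0 ≤ r → r < rstar → 0 < beanPhi r)
    (x : ℝ) (hx0 : 0 ≤ x) (hx : x < rstar) :
    0 ≤ beanPhi x - 2*(2-x)*(rstar^2-x^2)*Real.exp (2*x) := by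
  have h72 : rstar < 0.72 := rstar_lt_072 rstar hroot hpos
  have hR : rstar^2 ≤ 0.5184 := by nlinarith
  rcases le_or_gt x 0.6 with h6 | h6
  · exact psi_nonneg_low hR hx0 h6
  · -- 0.6 < x < rstar : use monotonicity
    set f : ℝ → ℝ := fun t => beanPhi t - 2*(2-t)*(rstar^2-t^2)*Real.exp (2*t) with hf
    have hanti : StrictAntiOn f (Set.Icc (0.6:ℝ) rstar) := by
      apply strictAntiOn_of_deriv_neg (convex_Icc _ _)
      · intro t _
        exact (hasDerivAt_psiF (rstar^2) t).differentiableAt.continuousAt.continuousWithinAt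
      · intro t ht
        rw [interior_Icc] at ht
        rw [(hasDerivAt_psiF (rstar^2) t).deriv]
        exact psi_deriv_neg (sq_nonneg rstar) ht.1.le (by linarith [ht.2])
    have hx_mem : x ∈ Set.Icc (0.6:ℝ) rstar := ⟨h6.le, hx.le⟩
    have hr_mem : rstar ∈ Set.Icc (0.6:ℝ) rstar := ⟨by linarith, le_refl _⟩
    have := hanti hx_mem hr_mem hx
    have hfr : f rstar = 0 := by
      simp only [hf, hroot]
      ring
    rw [hfr] at this
    exact this.le

lemma psi_nonneg (rstar : ℝ) (h0 : 0 < rstar) (hroot : beanPhi rstar = 0)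
    (hpos : ∀ r : ℝ, 0 ≤ r → r < rstar → 0 < beanPhi r)
    (x : ℝ) (hx : |x| < rstar) :
    0 ≤ beanPhi x - 2*(2-x)*(rstar^2-x^2)*Real.exp (2*x) := by
  have h72 : rstar < 0.72 := rstar_lt_072 rstar hroot hpos
  rcases le_or_gt 0 x with hx0 | hx0
  · exact psi_nonneg_pos rstar h0 hroot hpos x hx0 (by rwa [_root_.abs_of_nonneg hx0] at hx)
  · have hs0 : 0 ≤ -x := by linarith
    have hs : -x < rstar := by rwa [_root_.abs_of_neg hx0] at hx
    have hR1 : rstar^2 ≤ 1 := by nlinarith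
    have h := psi_symm hs0 hR1 (psi_nonneg_pos rstar h0 hroot hpos (-x) hs0 hs)
    simpa using h

lemma beanPhi_exp (x : ℝ) : beanPhi x
    = 1 + 2*Real.exp (2*x) + Real.exp (2*x)^2 - (-1 + Real.exp (2*x) + 2*Real.exp (2*x)^2)*x := by
  have h4x : Real.exp (4*x) = Real.exp (2*x)^2 := by
    rw [pow_two, ← Real.exp_add]; ring_nf
  simp [beanPhi, h4x]

lemma realQ (rstar : ℝ) (h0 : 0 < rstar) (hroot : beanPhi rstar = 0)
    (hpos : ∀ r : ℝ, 0 ≤ r → r < rstar → 0 < beanPhi r)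
    (x y : ℝ) (hxy : x^2 + y^2 < rstar^2) :
    x*(2*Real.exp (2*x)^2 - 1) + Real.exp (2*x)*x*Real.cos (2*y)
      - 3*Real.exp (2*x)*y*Real.sin (2*y)
      < Real.exp (2*x)^2 + 2*Real.exp (2*x)*Real.cos (2*y) + 1 := by
  have h72 : rstar < 0.72 := rstar_lt_072 rstar hroot hpos
  set E := Real.exp (2*x) with hE
  set c := Real.cos (2*y) with hc'
  set s := Real.sin (2*y) with hs'
  have hEpos : 0 < E := Real.exp_pos _
  have hx1 : x < rstar := by nlinarith
  have hx2 : -rstar < x := by nlinarith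
  have hx : |x| < rstar := abs_lt.mpr ⟨hx2, hx1⟩
  have hys : 0 ≤ y * s := by
    rcases le_or_gt 0 y with hy | hy
    · apply mul_nonneg hy
      apply Real.sin_nonneg_of_nonneg_of_le_pi (by linarith)
      nlinarith [Real.pi_gt_three]
    · have : 0 ≤ (-y) * Real.sin (2*(-y)) := by
        apply mul_nonneg (by linarith)
        apply Real.sin_nonneg_of_nonneg_of_le_pi (by linarith)
        nlinarith [Real.pi_gt_three]
      rw [show 2*(-y) = -(2*y) by ring, Real.sin_neg] at this
      simpa [hs'] using this
  have hcos : 1 - 2*y^2 ≤ c := by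
    have := Real.one_sub_sq_div_two_le_cos (x := 2*y)
    rw [hc']
    nlinarith [this]
  have hPsi : 0 ≤ beanPhi x - 2*(2-x)*(rstar^2-x^2)*E :=
    psi_nonneg rstar h0 hroot hpos x hx
  rw [beanPhi_exp x] at hPsi
  have a2 : 0 < 2*E*(2-x)*(rstar^2 - x^2 - y^2) := by
    apply mul_pos (mul_pos (by linarith) (by linarith))
    nlinarith
  have a3 : 0 ≤ E*(2-x)*(c - 1 + 2*y^2) := by
    apply mul_nonneg (mul_nonneg hEpos.le (by linarith))
    linarith
  have a4 : 0 ≤ 3*E*(y*s) := by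
    apply mul_nonneg (by linarith) hys
  nlinarith [hPsi, a2, a3, a4]


-- basic nonvanishing facts for |Im z| < 0.72
lemma cos2y_pos {y : ℝ} (hy : |y| < 0.72) : 0 < Real.cos (2*y) := by
  apply Real.cos_pos_of_mem_Ioo
  constructor <;> [skip; skip] <;> nlinarith [Real.pi_gt_three, abs_lt.mp hy |>.1, abs_lt.mp hy |>.2]

lemma wp1_ne {z : ℂ} (him : |z.im| < 0.72) : Complex.exp (2*z) + 1 ≠ 0 := by
  intro h
  have hre := congrArg Complex.re h
  simp only [Complex.add_re, Complex.one_re, Complex.exp_re, Complex.zero_re] at hre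
  have h2re : (2*z).re = 2*z.re := by simp
  have h2im : (2*z).im = 2*z.im := by simp
  rw [h2re, h2im] at hre
  nlinarith [Real.exp_pos (2*z.re), cos2y_pos him, mul_pos (Real.exp_pos (2*z.re)) (cos2y_pos him)]

lemma exp2z_eq (z : ℂ) : Complex.exp (2*z) = Complex.exp z * Complex.exp z := by
  rw [two_mul, Complex.exp_add]

lemma cosh_ne {z : ℂ} (him : |z.im| < 0.72) : Complex.cosh z ≠ 0 := by
  intro h
  apply wp1_ne him
  have hid : Complex.exp (2*z) + 1 = 2 * Complex.exp z * Complex.cosh z := by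
    rw [Complex.cosh, exp2z_eq]
    have : Complex.exp z * Complex.exp (-z) = 1 := by
      rw [← Complex.exp_add]; simp
    field_simp
    linear_combination (-(1:ℂ)) * this
  rw [hid, h, mul_zero]

lemma tanh_eq_exp {z : ℂ} (him : |z.im| < 0.72) :
    Complex.tanh z = (Complex.exp (2*z) - 1)/(Complex.exp (2*z) + 1) := by
  have hc := cosh_ne him
  have hw := wp1_ne him
  have hez : Complex.exp z ≠ 0 := Complex.exp_ne_zero z
  have h1 : Complex.exp z * Complex.exp (-z) = 1 := by rw [← Complex.exp_add]; simp
  rw [Complex.tanh_eq_sinh_div_cosh, Complex.sinh, Complex.cosh]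
  rw [div_eq_div_iff (by simpa [Complex.cosh] using hc) hw]
  rw [exp2z_eq]
  linear_combination (-(Complex.exp z)) * h1

lemma one_add_tanh_eq {z : ℂ} (him : |z.im| < 0.72) :
    1 + Complex.tanh z = 2*Complex.exp (2*z)/(Complex.exp (2*z) + 1) := by
  rw [tanh_eq_exp him]
  field_simp [wp1_ne him]
  ring

lemma one_sub_tanh_eq {z : ℂ} (him : |z.im| < 0.72) :
    1 - Complex.tanh z = 2/(Complex.exp (2*z) + 1) := by
  rw [tanh_eq_exp him]
  field_simp [wp1_ne him]
  ring

lemma one_sub_tanh_ne {z : ℂ} (him : |z.im| < 0.72) : 1 - Complex.tanh z ≠ 0 := by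
  rw [one_sub_tanh_eq him]
  exact div_ne_zero two_ne_zero (wp1_ne him)

lemma one_add_tanh_re_pos {z : ℂ} (him : |z.im| < 0.72) : 0 < (1 + Complex.tanh z).re := by
  rw [one_add_tanh_eq him]
  rw [Complex.div_re]
  have hre : (2*z).re = 2*z.re := by simp
  have him' : (2*z).im = 2*z.im := by simp
  set E := Real.exp (2*z.re) with hE
  set c := Real.cos (2*z.im) with hc
  set s := Real.sin (2*z.im) with hs
  have hwre : (Complex.exp (2*z)).re = E*c := by rw [Complex.exp_re, hre, him']
  have hwim : (Complex.exp (2*z)).im = E*s := by rw [Complex.exp_im, hre, him']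
  have hnsq : 0 < Complex.normSq (Complex.exp (2*z) + 1) :=
    Complex.normSq_pos.mpr (wp1_ne him)
  have h1 : (2*Complex.exp (2*z)).re = 2*(E*c) := by
    simp [Complex.mul_re, hwre, hwim]
  have h2 : (2*Complex.exp (2*z)).im = 2*(E*s) := by
    simp [Complex.mul_im, hwre, hwim]
  have h3 : (Complex.exp (2*z) + 1).re = E*c + 1 := by simp [hwre]
  have h4 : (Complex.exp (2*z) + 1).im = E*s := by simp [hwim]
  rw [h1, h2, h3, h4]
  have hcs : c^2 + s^2 = 1 := by rw [hc, hs]; exact Real.cos_sq_add_sin_sq (2*z.im)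
  have hcpos : 0 < c := cos2y_pos him
  have hEpos : 0 < E := Real.exp_pos _
  rw [← add_div]
  apply div_pos _ hnsq
  nlinarith [mul_pos hEpos hcpos, sq_nonneg (E*s), mul_pos hEpos hEpos]

lemma one_add_tanh_slit {z : ℂ} (him : |z.im| < 0.72) : (1 + Complex.tanh z) ∈ Complex.slitPlane :=
  Complex.mem_slitPlane_iff.mpr (Or.inl (one_add_tanh_re_pos him))

lemma one_add_tanh_ne {z : ℂ} (him : |z.im| < 0.72) : 1 + Complex.tanh z ≠ 0 := by
  intro h
  have := one_add_tanh_re_pos him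
  rw [h] at this
  simp at this

lemma hasDerivAt_tanh' {z : ℂ} (him : |z.im| < 0.72) :
    HasDerivAt Complex.tanh (1 - Complex.tanh z^2) z := by
  have h := (Complex.hasDerivAt_sinh z).div (Complex.hasDerivAt_cosh z) (cosh_ne him)
  have hfun : Complex.tanh = fun x => Complex.sinh x / Complex.cosh x := by
    funext x; exact Complex.tanh_eq_sinh_div_cosh x
  rw [hfun]
  refine h.congr_deriv ?_
  have hc := cosh_ne him
  beta_reduce
  field_simp

lemma Bean_ne {z : ℂ} (him : |z.im| < 0.72) : Bean z ≠ 0 := by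
  unfold Bean
  rw [Complex.cpow_def_of_ne_zero (one_add_tanh_ne him)]
  exact Complex.exp_ne_zero _

lemma hasDerivAt_Bean {z : ℂ} (him : |z.im| < 0.72) :
    HasDerivAt Bean ((1/2)*(1 - Complex.tanh z)*Bean z) z := by
  have ht : HasDerivAt (fun w => 1 + Complex.tanh w) (1 - Complex.tanh z^2) z :=
    (hasDerivAt_tanh' him).const_add 1
  have h := ht.cpow_const (c := (1:ℂ)/2) (one_add_tanh_slit him)
  have hne := one_add_tanh_ne him
  have hpow : (1 + Complex.tanh z)^((1:ℂ)/2)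
      = (1 + Complex.tanh z)^((1:ℂ)/2 - 1) * (1 + Complex.tanh z) := by
    conv_lhs => rw [show ((1:ℂ)/2) = ((1:ℂ)/2 - 1) + 1 by ring]
    rw [Complex.cpow_add _ _ hne, Complex.cpow_one]
  refine h.congr_deriv ?_
  unfold Bean
  rw [hpow]
  ring

lemma hasDerivAt_B1 {z : ℂ} (him : |z.im| < 0.72) :
    HasDerivAt (fun w => (1/2:ℂ)*(1 - Complex.tanh w)*Bean w)
      ((1/2)*(1 - Complex.tanh z)*Bean z * (-(1 + 3*Complex.tanh z)/2)) z := by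
  have h1 : HasDerivAt (fun w => (1/2:ℂ)*(1 - Complex.tanh w))
      ((1/2:ℂ)*(-(1 - Complex.tanh z^2))) z := by
    have := ((hasDerivAt_tanh' him).const_sub 1).const_mul ((1:ℂ)/2)
    simpa using this
  have h := h1.mul (hasDerivAt_Bean him)
  exact h.congr_deriv (by ring)

lemma deriv_Bean_eq {z : ℂ} (him : |z.im| < 0.72) :
    deriv Bean z = (1/2)*(1 - Complex.tanh z)*Bean z := (hasDerivAt_Bean him).deriv

lemma deriv2_Bean_eq {z : ℂ} (him : |z.im| < 0.72) :
    deriv (deriv Bean) z = (1/2)*(1 - Complex.tanh z)*Bean z * (-(1 + 3*Complex.tanh z)/2) := by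
  have hopen : IsOpen {w : ℂ | |w.im| < 0.72} :=
    isOpen_lt (Complex.continuous_im.abs) continuous_const
  have hU : {w : ℂ | |w.im| < 0.72} ∈ nhds z := hopen.mem_nhds him
  have heq : deriv Bean =ᶠ[nhds z] fun w => (1/2:ℂ)*(1 - Complex.tanh w)*Bean w :=
    Filter.eventuallyEq_of_mem hU (fun w hw => (hasDerivAt_Bean hw).deriv)
  rw [heq.deriv_eq]
  exact (hasDerivAt_B1 him).deriv

lemma final_form {z : ℂ} (him : |z.im| < 0.72) :
    1 + z * deriv (deriv Bean) z / deriv Bean z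
      = 1 - z*(2*Complex.exp (2*z) - 1)/(Complex.exp (2*z) + 1) := by
  rw [deriv2_Bean_eq him, deriv_Bean_eq him]
  have hB1ne : (1/2:ℂ)*(1 - Complex.tanh z)*Bean z ≠ 0 :=
    mul_ne_zero (mul_ne_zero (by norm_num) (one_sub_tanh_ne him)) (Bean_ne him)
  have habm : ∀ (a b m : ℂ), b ≠ 0 → a * (b * m) / b = a * m := by
    intro a b m hb
    field_simp
  have hc : z * ((1/2:ℂ)*(1 - Complex.tanh z)*Bean z * (-(1 + 3*Complex.tanh z)/2))
      / ((1/2:ℂ)*(1 - Complex.tanh z)*Bean z) = z * (-(1 + 3*Complex.tanh z)/2) := by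
    have := habm z ((1/2:ℂ)*(1 - Complex.tanh z)*Bean z) (-(1 + 3*Complex.tanh z)/2) hB1ne
    exact this
  rw [hc, tanh_eq_exp him]
  have hw := wp1_ne him
  generalize Complex.exp (2*z) = w at hw ⊢
  field_simp
  ring

lemma re_pos_of_Q {z : ℂ}
    (him : |z.im| < 0.72)
    (hQ : z.re*(2*Real.exp (2*z.re)^2 - 1)
        + Real.exp (2*z.re)*z.re*Real.cos (2*z.im)
        - 3*Real.exp (2*z.re)*z.im*Real.sin (2*z.im)
      < Real.exp (2*z.re)^2 + 2*Real.exp (2*z.re)*Real.cos (2*z.im) + 1) :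
    0 < (1 + z * deriv (deriv Bean) z / deriv Bean z).re := by
  rw [final_form him]
  have hw := wp1_ne him
  have hrw : 1 - z*(2*Complex.exp (2*z) - 1)/(Complex.exp (2*z) + 1)
      = ((Complex.exp (2*z) + 1) - z*(2*Complex.exp (2*z) - 1))/(Complex.exp (2*z) + 1) := by
    rw [eq_div_iff hw, sub_mul, div_mul_cancel₀ _ hw, one_mul]
  rw [hrw, Complex.div_re]
  set E := Real.exp (2*z.re) with hE
  set c := Real.cos (2*z.im) with hc'
  set s := Real.sin (2*z.im) with hs'
  set x := z.re with hx
  set y := z.im with hy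
  have hwre : (Complex.exp (2*z)).re = E*c := by
    rw [Complex.exp_re, hE, hc', show (2*z).re = 2*x by simp [hx], show (2*z).im = 2*y by simp [hy]]
  have hwim : (Complex.exp (2*z)).im = E*s := by
    rw [Complex.exp_im, hE, hs', show (2*z).re = 2*x by simp [hx], show (2*z).im = 2*y by simp [hy]]
  have hNre : ((Complex.exp (2*z) + 1) - z*(2*Complex.exp (2*z) - 1)).re
      = E*c + 1 - (x*(2*(E*c) - 1) - y*(2*(E*s))) := by
    simp only [Complex.sub_re, Complex.add_re, Complex.mul_re, Complex.mul_im, hwre, hwim, Complex.sub_im, Complex.add_im, Complex.one_re, Complex.one_im, Complex.re_ofNat, Complex.im_ofNat]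
    ring
  have hNim : ((Complex.exp (2*z) + 1) - z*(2*Complex.exp (2*z) - 1)).im
      = E*s - (x*(2*(E*s)) + y*(2*(E*c) - 1)) := by
    simp only [Complex.sub_re, Complex.add_re, Complex.mul_re, Complex.mul_im, hwre, hwim, Complex.sub_im, Complex.add_im, Complex.one_re, Complex.one_im, Complex.re_ofNat, Complex.im_ofNat]
    ring
  have hvre : (Complex.exp (2*z) + 1).re = E*c + 1 := by simp [hwre]
  have hvim : (Complex.exp (2*z) + 1).im = E*s := by simp [hwim]
  rw [hNre, hNim, hvre, hvim, ← add_div]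
  apply div_pos _ (Complex.normSq_pos.mpr hw)
  have hcs : c^2 + s^2 = 1 := by rw [hc', hs']; exact Real.cos_sq_add_sin_sq (2*z.im)
  have h2 : (E*c + 1 - (x*(2*(E*c) - 1) - y*(2*(E*s))))*(E*c + 1)
      + (E*s - (x*(2*(E*s)) + y*(2*(E*c) - 1)))*(E*s)
      = (E^2 + 2*E*c + 1) - (x*(2*E^2 - 1) + E*x*c - 3*E*y*s) := by
    linear_combination (E^2 - 2*x*E^2) * hcs
  rw [h2]
  linarith [hQ]

end Aux

/-- 𝔅 is convex on |z| < r*, where r* is the smallest positive root of φ. -/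
theorem beanConvexRadius (rstar : ℝ) (h0 : 0 < rstar) (h1 : rstar < 1)
    (hroot : beanPhi rstar = 0)
    (hpos : ∀ r : ℝ, 0 ≤ r → r < rstar → 0 < beanPhi r) :
    ∀ z : ℂ, ‖z‖ < rstar →
      0 < (1 + z * deriv (deriv Bean) z / deriv Bean z).re := by
  intro z hz
  have h72 : rstar < 0.72 := rstar_lt_072 rstar hroot hpos
  have him : |z.im| < 0.72 :=
    lt_of_le_of_lt (by simpa using Complex.abs_im_le_norm z) (lt_trans hz h72)
  apply re_pos_of_Q him
  apply realQ rstar h0 hroot hpos z.re z.im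
  have h1' : ‖z‖ < rstar := hz
  have h2 : ‖z‖ ^ 2 < rstar ^ 2 := by
    nlinarith [norm_nonneg z]
  rw [Complex.sq_norm, Complex.normSq_apply] at h2
  nlinarith [h2]
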